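/- Let G be a simple graph containing a cycle C = v - u - u_1 - u_2 - ... - u_l - u' - v of length at least 6, in which u - u_1 - ... - u_l - u' is an induced path. Then G contains an induced cycle of length at least 4, or G contains an induced claw J and a triangle T with J and T sharing at least one vertex. -/

import Mathlib

open SimpleGraph

def IsClaw {V : Type*} (G : SimpleGraph V) (v a b c : V) : Prop :=
  a ≠ b ∧ a ≠ c ∧ b ≠ c ∧ G.Adj v a ∧ G.Adj v b ∧ G.Adj v c ∧
    ¬ G.Adj a b ∧ ¬ G.Adj a c ∧ ¬ G.Adj b c

def IsTriangle {V : Type*} (G : SimpleGraph V) (a b c : V) : Prop :=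
  G.Adj a b ∧ G.Adj a c ∧ G.Adj b c

def IsInducedCycle {V : Type*} (G : SimpleGraph V) {n : ℕ} (c : Fin n → V) : Prop :=
  Function.Injective c ∧ ∀ i j : Fin n,
    G.Adj (c i) (c j) ↔ ((i.val + 1) % n = j.val ∨ (j.val + 1) % n = i.val)

def IsInducedPathFun {V : Type*} (G : SimpleGraph V) {m : ℕ} (p : Fin m → V) : Prop :=
  Function.Injective p ∧
    ∀ i j : Fin m, G.Adj (p i) (p j) ↔ (i.val + 1 = j.val ∨ j.val + 1 = i.val)

def IsProperIntervalGraph {W : Type*} (H : SimpleGraph W) : Prop :=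
  ∃ f : W → ℝ, ∀ u v : W, u ≠ v → (H.Adj u v ↔ |f u - f v| ≤ 1)

def ComponentsPIGOrTree {W : Type*} (G : SimpleGraph W) : Prop :=
  ∀ c : G.ConnectedComponent,
    IsProperIntervalGraph (G.induce c.supp) ∨ (G.induce c.supp).IsTree

def IndepSet {V : Type*} (G : SimpleGraph V) (s : Set V) : Prop :=
  ∀ u ∈ s, ∀ v ∈ s, ¬ G.Adj u v

/-- A cycle v-u₀-⋯-u_{m-1}-v of length at least 6 whose part u₀-⋯-u_{m-1}
is an induced path yields an induced cycle of length ≥ 4 or an intersecting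
claw-triangle pair. -/
theorem stmt2 {V : Type*} (G : SimpleGraph V) (v : V) {m : ℕ} (u : Fin m → V)
    (hm : 5 ≤ m)
    (hpath : IsInducedPathFun G u)
    (hv : ∀ i, v ≠ u i)
    (h0 : G.Adj v (u ⟨0, by omega⟩))
    (hl : G.Adj v (u ⟨m - 1, by omega⟩)) :
    (∃ n : ℕ, 4 ≤ n ∧ ∃ c : Fin n → V, IsInducedCycle G c) ∨
    (∃ w a b c x y z : V, IsClaw G w a b c ∧ IsTriangle G x y z ∧
      (({w, a, b, c} : Set V) ∩ {x, y, z}).Nonempty) := by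
  classical
  obtain ⟨hinj, hadj⟩ := hpath
  have hm0 : 0 < m := by omega
  have hm1 : m - 1 < m := by omega
  set U : ℕ → V := fun j => u ⟨j % m, Nat.mod_lt _ hm0⟩ with hUdef
  have hUeq : ∀ j (h : j < m), U j = u ⟨j, h⟩ := by
    intro j h
    simp only [hUdef]
    congr 1
    exact Fin.ext (Nat.mod_eq_of_lt h)
  have hadjU : ∀ j1 j2, j1 < m → j2 < m →
      (G.Adj (U j1) (U j2) ↔ j1 + 1 = j2 ∨ j2 + 1 = j1) := by
    intro j1 j2 h1 h2
    rw [hUeq j1 h1, hUeq j2 h2]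
    exact hadj ⟨j1, h1⟩ ⟨j2, h2⟩
  have hUinj : ∀ j1 j2, j1 < m → j2 < m → U j1 = U j2 → j1 = j2 := by
    intro j1 j2 h1 h2 he
    rw [hUeq j1 h1, hUeq j2 h2] at he
    exact congrArg Fin.val (hinj he)
  have hvU : ∀ j, j < m → v ≠ U j := by
    intro j h
    rw [hUeq j h]; exact hv _
  have hQ0 : G.Adj v (U 0) := by rw [hUeq 0 hm0]; exact h0
  have hQl : G.Adj v (U (m - 1)) := by rw [hUeq _ hm1]; exact hl
  by_cases hall : ∀ j, j < m → G.Adj v (U j)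
  · right
    refine ⟨v, U 0, U 2, U 4, v, U 0, U 1,
      ⟨?_, ?_, ?_, hall 0 (by omega), hall 2 (by omega), hall 4 (by omega), ?_, ?_, ?_⟩,
      ⟨hall 0 (by omega), hall 1 (by omega), ?_⟩, ⟨v, by simp⟩⟩
    · intro h; have := hUinj 0 2 (by omega) (by omega) h; omega
    · intro h; have := hUinj 0 4 (by omega) (by omega) h; omega
    · intro h; have := hUinj 2 4 (by omega) (by omega) h; omega
    · rw [hadjU 0 2 (by omega) (by omega)]; omega
    · rw [hadjU 0 4 (by omega) (by omega)]; omega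
    · rw [hadjU 2 4 (by omega) (by omega)]; omega
    · rw [hadjU 0 1 (by omega) (by omega)]; omega
  · push_neg at hall
    obtain ⟨k, hk, hkn⟩ := hall
    have hk0 : k ≠ 0 := fun h => hkn (h ▸ hQ0)
    have hkl : k ≠ m - 1 := fun h => hkn (h ▸ hQl)
    set a := Nat.findGreatest (fun j => G.Adj v (U j)) k with hadef
    have haP : G.Adj v (U a) := Nat.findGreatest_spec (P := fun j => G.Adj v (U j)) (Nat.zero_le k) hQ0
    have hak : a ≤ k := Nat.findGreatest_le (P := fun j => G.Adj v (U j)) k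
    have hamax : ∀ j, a < j → j ≤ k → ¬ G.Adj v (U j) := fun j h1 h2 =>
      Nat.findGreatest_is_greatest (P := fun j => G.Adj v (U j)) h1 h2
    have hak' : a < k := lt_of_le_of_ne hak (fun h => hkn (h ▸ haP))
    have hex : ∃ nn, G.Adj v (U (k + 1 + nn)) := by
      refine ⟨m - 2 - k, ?_⟩
      have h : k + 1 + (m - 2 - k) = m - 1 := by omega
      rw [h]; exact hQl
    set b := k + 1 + Nat.find hex with hbdef
    have hbP : G.Adj v (U b) := Nat.find_spec hex
    have hble : Nat.find hex ≤ m - 2 - k := by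
      apply Nat.find_le
      have h : k + 1 + (m - 2 - k) = m - 1 := by omega
      rw [h]; exact hQl
    have hbm : b < m := by omega
    have hkb : k < b := by omega
    have hbmin : ∀ j, k < j → j < b → ¬ G.Adj v (U j) := by
      intro j h1 h2 hQj
      apply Nat.find_min hex (m := j - k - 1) (by omega)
      have h : k + 1 + (j - k - 1) = j := by omega
      rw [h]; exact hQj
    have hgap : ∀ j, a < j → j < b → ¬ G.Adj v (U j) := by
      intro j h1 h2
      rcases le_or_gt j k with h | h
      · exact hamax j h1 h
      · exact hbmin j h h2
    have hQiff : ∀ j, a ≤ j → j ≤ b → (G.Adj v (U j) ↔ j = a ∨ j = b) := by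
      intro j h1 h2
      constructor
      · intro hQj
        by_contra hc
        push_neg at hc
        exact hgap j (lt_of_le_of_ne h1 (Ne.symm hc.1)) (lt_of_le_of_ne h2 hc.2) hQj
      · rintro (rfl | rfl)
        · exact haP
        · exact hbP
    set n := b - a + 2 with hndef
    have hn4 : 4 ≤ n := by omega
    set c : Fin n → V := fun i => if i.val = 0 then v else U (a + i.val - 1) with hcdef
    have hcm : ∀ i : Fin n, i.val ≠ 0 → a + i.val - 1 < m := by
      intro i hi
      have := i.2
      omega
    have hc0 : ∀ i : Fin n, i.val = 0 → c i = v := by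
      intro i hi; simp only [hcdef]; exact if_pos hi
    have hcs : ∀ i : Fin n, i.val ≠ 0 → c i = U (a + i.val - 1) := by
      intro i hi; simp only [hcdef]; exact if_neg hi
    have hmod : ∀ x : ℕ, x < n → (x + 1) % n = if x + 1 = n then 0 else x + 1 := by
      intro x hx
      by_cases h : x + 1 = n
      · simp [h, Nat.mod_self]
      · rw [if_neg h, Nat.mod_eq_of_lt (by omega)]
    have hRHS : ∀ i j : Fin n, ((i.val + 1) % n = j.val ∨ (j.val + 1) % n = i.val) ↔
        (i.val + 1 = j.val ∨ j.val + 1 = i.val ∨ (i.val = n - 1 ∧ j.val = 0) ∨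
          (j.val = n - 1 ∧ i.val = 0)) := by
      intro i j
      have hi2 := i.2
      have hj2 := j.2
      rw [hmod i.val i.2, hmod j.val j.2]
      split_ifs <;> omega
    left
    refine ⟨n, hn4, c, ?_, ?_⟩
    · intro i j hij
      by_cases hi : i.val = 0 <;> by_cases hj : j.val = 0
      · exact Fin.ext (by omega)
      · rw [hc0 i hi, hcs j hj] at hij
        exact absurd hij (hvU _ (hcm j hj))
      · rw [hcs i hi, hc0 j hj] at hij
        exact absurd hij.symm (hvU _ (hcm i hi))
      · rw [hcs i hi, hcs j hj] at hij
        have := hUinj _ _ (hcm i hi) (hcm j hj) hij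
        exact Fin.ext (by omega)
    · intro i j
      have hi2 := i.2
      have hj2 := j.2
      rw [hRHS i j]
      by_cases hi : i.val = 0 <;> by_cases hj : j.val = 0
      · rw [hc0 i hi, hc0 j hj]
        constructor
        · intro h; exact absurd h (G.irrefl)
        · intro h; exfalso; omega
      · rw [hc0 i hi, hcs j hj,
          hQiff (a + j.val - 1) (by omega) (by omega)]
        omega
      · rw [hcs i hi, hc0 j hj]
        rw [show G.Adj (U (a + i.val - 1)) v ↔ G.Adj v (U (a + i.val - 1)) from G.adj_comm _ _,
          hQiff (a + i.val - 1) (by omega) (by omega)]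
        omega
      · rw [hcs i hi, hcs j hj, hadjU _ _ (hcm i hi) (hcm j hj)]
        omega
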